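/- Let $k = \mathbb{F}_q$ be a finite field of characteristic $2$, let $K_2 = \mathbb{F}_{q^2} \subseteq K_4 = \mathbb{F}_{q^4}$ be the extensions of $k$ of degrees $2$ and $4$ with trace maps to $k$, and let $X = \{(b,c) \in K_2^* \times K_4^* \mid \mathrm{Tr}_{K_4/k}(c) + \mathrm{Tr}_{K_2/k}(b) \neq 1\}$. The Frobenius map $\varphi(b,c) = (b^q, c^q)$ maps $X$ to itself and the number of its orbits on $X$ equals $\frac{1}{4}\left(q^6 - q^5 - q^2 - 2q + 4\right)$. -/

import Mathlib

open Finset Polynomial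


lemma aux_card_pow_eq_one {K : Type} [Field K] [Fintype K] [DecidableEq K]
    {d : ℕ} (hd : 0 < d) (hdvd : d ∣ Fintype.card K - 1) :
    (Finset.univ.filter fun u : Kˣ => u ^ d = 1).card = d := by
  classical
  have hcardu : Fintype.card Kˣ = Fintype.card K - 1 := Fintype.card_units K
  have hdvd' : d ∣ Fintype.card Kˣ := hcardu ▸ hdvd
  have hN0 : 0 < Fintype.card Kˣ := Fintype.card_pos
  refine le_antisymm ?_ ?_
  · have := IsCyclic.card_pow_eq_one_le (α := Kˣ) hd
    convert this using 2
  · obtain ⟨g, hg⟩ := IsCyclic.exists_generator (α := Kˣ)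
    have hgord : orderOf g = Fintype.card Kˣ := by
      rw [orderOf_eq_card_of_forall_mem_zpowers hg, Nat.card_eq_fintype_card]
    set x := g ^ (Fintype.card Kˣ / d) with hxdef
    have hx : orderOf x = d := by
      rw [hxdef, orderOf_pow, hgord, Nat.gcd_eq_right (Nat.div_dvd_of_dvd hdvd'),
        Nat.div_div_self hdvd' hN0.ne']
    have hxd : x ^ d = 1 := by rw [← hx]; exact pow_orderOf_eq_one x
    calc d = ((Subgroup.zpowers x : Set Kˣ).toFinset).card := by
          rw [Set.toFinset_card]
          simp only [SetLike.coe_sort_coe]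
          rw [Fintype.card_zpowers, hx]
    _ ≤ _ := by
        apply Finset.card_le_card
        intro y hy
        rw [Set.mem_toFinset, SetLike.mem_coe, Subgroup.mem_zpowers_iff] at hy
        obtain ⟨k, hk⟩ := hy
        simp only [mem_filter, mem_univ, true_and]
        rw [← hk, ← zpow_natCast, ← zpow_mul, mul_comm, zpow_mul, zpow_natCast, hxd, one_zpow]

lemma aux_count_pow_fixed {K : Type} [Field K] [Fintype K] [DecidableEq K]
    {r : ℕ} (hr : 2 ≤ r) (hdvd : (r - 1) ∣ Fintype.card K - 1) :
    (Finset.univ.filter fun x : K => x ^ r = x).card = r := by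
  classical
  set S := Finset.univ.filter (fun x : K => x ^ r = x) with hS
  have h0 : (0 : K) ∈ S := by
    simp [hS, zero_pow (by omega : r ≠ 0)]
  have herase : (S.erase 0).card = r - 1 := by
    rw [← aux_card_pow_eq_one (K := K) (d := r - 1) (by omega) hdvd]
    refine Finset.card_bij' (fun x hx => Units.mk0 x (Finset.mem_erase.mp hx).1)
      (fun u _ => (u : K)) ?hi ?hj ?left ?right
    case hi =>
      intro x hx
      obtain ⟨hx0, hxS⟩ := Finset.mem_erase.mp hx
      rw [hS, Finset.mem_filter] at hxS
      simp only [mem_filter, mem_univ, true_and]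
      ext
      rw [Units.val_pow_eq_pow_val, Units.val_mk0, Units.val_one]
      have : x ^ (r - 1) * x = 1 * x := by
        rw [one_mul, ← pow_succ, Nat.sub_add_cancel (by omega), hxS.2]
      exact mul_right_cancel₀ hx0 this
    case hj =>
      intro u hu
      rw [Finset.mem_filter] at hu
      rw [Finset.mem_erase]
      refine ⟨Units.ne_zero u, ?_⟩
      rw [hS, Finset.mem_filter]
      refine ⟨Finset.mem_univ _, ?_⟩
      have h1 : ((u : K)) ^ (r-1) = 1 := by
        rw [← Units.val_pow_eq_pow_val, hu.2, Units.val_one]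
      calc ((u:K))^r = ((u:K))^(r-1) * u := by rw [← pow_succ, Nat.sub_add_cancel (by omega)]
      _ = u := by rw [h1, one_mul]
    case left =>
      intro x hx; simp
    case right =>
      intro u hu; ext; simp
  have := Finset.card_erase_add_one h0
  omega

lemma aux_card_prod {α β : Type} [Fintype α] [Fintype β] [DecidableEq α]
    (P : α × β → Prop) [DecidablePred P] :
    (Finset.univ.filter P).card = ∑ a : α, (Finset.univ.filter fun b => P (a, b)).card := by
  classical
  rw [Finset.card_eq_sum_card_fiberwise (f := Prod.fst) (t := Finset.univ)
    (fun x _ => Finset.mem_univ _)]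
  refine Finset.sum_congr rfl fun a _ => ?_
  refine Finset.card_bij' (fun v _ => v.2) (fun b _ => (a, b)) ?hi ?hj ?left ?right
  case hi =>
    intro v hv
    simp only [Finset.mem_filter, Finset.mem_univ, true_and] at hv ⊢
    obtain ⟨hP, h1⟩ := hv
    rwa [← h1]
  case hj =>
    intro b hb
    simp only [Finset.mem_filter, Finset.mem_univ, true_and] at hb ⊢
    exact ⟨hb, trivial⟩
  case left =>
    intro v hv
    simp only [Finset.mem_filter] at hv
    show (a, v.2) = v
    rw [← hv.2]
  case right =>
    intro b hb; rfl

lemma aux_fiber_count {K : Type} [Field K] [Fintype K] [DecidableEq K]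
    (T : K →+ K) (F : Finset K) (a : ℕ)
    (hF : ∀ x, T x ∈ F)
    (hker : (Finset.univ.filter fun x : K => T x = 0).card ≤ a)
    (hcard : Fintype.card K = a * F.card) :
    ∀ t ∈ F, (Finset.univ.filter fun x : K => T x = t).card = a := by
  classical
  have hsum : ∑ t ∈ F, (Finset.univ.filter fun x : K => T x = t).card = Fintype.card K := by
    rw [← Finset.card_univ,
      Finset.card_eq_sum_card_fiberwise (f := T) (t := F) (fun x _ => hF x)]
  have hle : ∀ t ∈ F, (Finset.univ.filter fun x : K => T x = t).card ≤ a := by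
    intro t _
    rcases Finset.eq_empty_or_nonempty (Finset.univ.filter fun x : K => T x = t) with h | ⟨x₀, hx₀⟩
    · simp [h]
    · refine le_trans ?_ hker
      rw [Finset.mem_filter] at hx₀
      apply Finset.card_le_card_of_injOn (fun x => x - x₀)
      · intro x hx
        simp only [Finset.coe_filter, Finset.mem_univ, true_and, Set.mem_setOf_eq] at hx ⊢
        simp [map_sub, hx, hx₀.2]
      · intro x _ y _ hxy
        simpa using congrArg (· + x₀) hxy
  by_contra hcon
  push_neg at hcon
  obtain ⟨t₀, ht₀F, ht₀⟩ := hcon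
  have hlt : (Finset.univ.filter fun x : K => T x = t₀).card < a := lt_of_le_of_ne (hle t₀ ht₀F) ht₀
  have : ∑ t ∈ F, (Finset.univ.filter fun x : K => T x = t).card < ∑ _t ∈ F, a :=
    Finset.sum_lt_sum hle ⟨t₀, ht₀F, hlt⟩
  rw [Finset.sum_const, smul_eq_mul, hsum, hcard, mul_comm] at this
  exact lt_irrefl _ this


lemma aux_ker_le {K : Type} [Field K] [Fintype K] [DecidableEq K] {q : ℕ} (hq : 2 ≤ q) :
    (Finset.univ.filter fun c : K => c + c ^ q + c ^ q ^ 2 + c ^ q ^ 3 = 0).card ≤ q ^ 3 := by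
  classical
  set p : K[X] := X + X ^ q + X ^ q ^ 2 + X ^ q ^ 3 with hp
  have h1 : 1 < q ^ 3 := by
    calc 1 < 2 ^ 3 := by norm_num
    _ ≤ q ^ 3 := Nat.pow_le_pow_left hq 3
  have h2 : q < q ^ 3 := by
    conv_lhs => rw [← pow_one q]
    exact Nat.pow_lt_pow_right (by omega) (by omega)
  have h3 : q ^ 2 < q ^ 3 := by
    exact Nat.pow_lt_pow_right (by omega) (by omega)
  have hdeg : p.natDegree = q ^ 3 := by
    rw [hp]
    compute_degree!
    · rw [if_neg h1.ne, if_neg h2.ne', if_neg h3.ne']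
      norm_num
    · exact h3.le
    · exact h2.le
    · rw [max_eq_right h3.le, max_eq_right h2.le, max_eq_right h1.le]
  have hp0 : p ≠ 0 := by
    intro h
    rw [h, natDegree_zero] at hdeg
    omega
  calc (Finset.univ.filter fun c : K => c + c ^ q + c ^ q ^ 2 + c ^ q ^ 3 = 0).card
      ≤ p.roots.toFinset.card := by
        apply Finset.card_le_card
        intro x hx
        rw [Finset.mem_filter] at hx
        rw [Multiset.mem_toFinset, Polynomial.mem_roots hp0]
        simp only [IsRoot, hp, eval_add, eval_pow, eval_X]
        exact hx.2
    _ ≤ Multiset.card p.roots := Multiset.toFinset_card_le _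
    _ ≤ p.natDegree := p.card_roots'
    _ = q ^ 3 := hdeg

lemma aux_filter_prod_card {α β : Type} [Fintype α] [Fintype β] [DecidableEq α]
    (P : α → Prop) (Q : β → Prop) [DecidablePred P] [DecidablePred Q] :
    (Finset.univ.filter fun v : α × β => P v.1 ∧ Q v.2).card
      = (Finset.univ.filter P).card * (Finset.univ.filter Q).card := by
  classical
  rw [aux_card_prod]
  have : ∀ a : α, (Finset.univ.filter fun b : β => P a ∧ Q b).card
      = if P a then (Finset.univ.filter Q).card else 0 := by
    intro a
    by_cases hPa : P a
    · rw [if_pos hPa]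
      congr 1
      apply Finset.filter_congr
      intro b _
      simp [hPa]
    · rw [if_neg hPa]
      rw [Finset.card_eq_zero, Finset.filter_eq_empty_iff]
      intro b _
      rintro ⟨h, -⟩
      exact hPa h
  rw [Finset.sum_congr rfl (fun a _ => this a), ← Finset.sum_filter, Finset.sum_const,
    smul_eq_mul]

/-- The defining conditions of the set `X` of descent data `𝒟_{γ₄}`:
pairs `(b,c) ∈ K₂* × K₄*` with `Tr_{K₄/k}(c) + Tr_{K₂/k}(b) ≠ 1`. -/
def stmt9Cond (K₂ K₄ : Type) [Field K₂] [Field K₄] [Algebra K₂ K₄] (q : ℕ)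
    (v : K₂ × K₄) : Prop :=
  v.1 ≠ 0 ∧ v.2 ≠ 0 ∧
    (v.2 + v.2 ^ q + v.2 ^ q ^ 2 + v.2 ^ q ^ 3)
      + algebraMap K₂ K₄ (v.1 + v.1 ^ q) ≠ 1

set_option maxHeartbeats 1000000 in
/-- Let `k = 𝔽_q` be a finite field of characteristic 2 with extensions
`K₂ = 𝔽_{q²} ⊆ K₄ = 𝔽_{q⁴}`. The Frobenius `φ(b,c) = (b^q, c^q)` maps
`X = 𝒟_{γ₄}` to itself and the number of its orbits on `X` equals
`(q⁶ - q⁵ - q² - 2q + 4)/4`. -/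
theorem stmt_9 (K₂ K₄ : Type) [Field K₂] [Fintype K₂] [CharP K₂ 2]
    [Field K₄] [Fintype K₄] [Algebra K₂ K₄] (q : ℕ)
    (h2 : Fintype.card K₂ = q ^ 2) (h4 : Fintype.card K₄ = q ^ 4) :
    (∀ v : K₂ × K₄, stmt9Cond K₂ K₄ q v → stmt9Cond K₂ K₄ q (v.1 ^ q, v.2 ^ q)) ∧
    (4 : ℤ) * Nat.card (Quot fun (x y : {v : K₂ × K₄ // stmt9Cond K₂ K₄ q v}) =>
        (x.1.1 ^ q, x.1.2 ^ q) = y.1)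
      = q ^ 6 - q ^ 5 - q ^ 2 - 2 * q + 4 := by
  classical
  -- ### basic numerology
  have hK2 : (1:ℕ) < Fintype.card K₂ := Fintype.one_lt_card
  have hq : 2 ≤ q := by
    rcases Nat.lt_or_ge q 2 with h | h
    · interval_cases q <;> simp_all
    · exact h
  -- q is a power of 2
  obtain ⟨n, -, hcard2⟩ := FiniteField.card K₂ 2
  have hqdvd : q ∣ 2 ^ (n:ℕ) := by
    rw [← hcard2, h2]
    exact dvd_pow_self q (by norm_num)
  obtain ⟨m, -, hqm⟩ := (Nat.dvd_prime_pow Nat.prime_two).mp hqdvd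
  -- K₄ has characteristic 2
  haveI : CharP K₄ (ringChar K₄) := ringChar.charP K₄
  obtain ⟨n4, hp4, hcard4⟩ := FiniteField.card K₄ (ringChar K₄)
  have hchar4' : ringChar K₄ = 2 := by
    have h2q : 2 ∣ q := by
      rw [hqm]
      exact dvd_pow_self 2 (by rintro rfl; norm_num at hqm; omega)
    have : (2:ℕ) ∣ ringChar K₄ ^ (n4:ℕ) := by
      rw [← hcard4, h4]
      exact dvd_trans h2q (dvd_pow_self q (by norm_num))
    have h2p : (2:ℕ) ∣ ringChar K₄ := Nat.Prime.dvd_of_dvd_pow Nat.prime_two this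
    rcases (Nat.Prime.eq_one_or_self_of_dvd hp4 2 h2p) with h | h
    · norm_num at h
    · exact h.symm
  haveI hchar4 : CharP K₄ 2 := hchar4' ▸ ringChar.charP K₄
  -- Frobenius additivity
  have haddpow2 : ∀ (i : ℕ) (x y : K₂), (x + y) ^ q ^ i = x ^ q ^ i + y ^ q ^ i := by
    intro i x y
    rw [hqm, ← pow_mul]
    exact add_pow_char_pow ..
  have haddpow4 : ∀ (i : ℕ) (x y : K₄), (x + y) ^ q ^ i = x ^ q ^ i + y ^ q ^ i := by
    intro i x y
    rw [hqm, ← pow_mul]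
    exact add_pow_char_pow ..
  have hadd2 : ∀ x y : K₂, (x + y) ^ q = x ^ q + y ^ q := by
    intro x y
    have := haddpow2 1 x y
    simpa using this
  have hadd4 : ∀ x y : K₄, (x + y) ^ q = x ^ q + y ^ q := by
    intro x y
    have := haddpow4 1 x y
    simpa using this
  have hpow2 : ∀ b : K₂, b ^ q ^ 2 = b := fun b => by
    rw [← h2]; exact FiniteField.pow_card b
  have hpow4 : ∀ c : K₄, c ^ q ^ 4 = c := fun c => by
    rw [← h4]; exact FiniteField.pow_card c
  have hq0 : q ≠ 0 := by omega
  -- char-2 helpers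
  have haddself4 : ∀ x : K₄, x + x = 0 := CharTwo.add_self_eq_zero
  have haddself2 : ∀ x : K₂, x + x = 0 := CharTwo.add_self_eq_zero
  have haddzero4 : ∀ x y : K₄, x + y = 0 ↔ x = y := by
    intro x y
    rw [add_eq_zero_iff_eq_neg, CharTwo.neg_eq]
  -- exponent shuffling
  have epow2 : ∀ b : K₂, (b ^ q) ^ q = b := by
    intro b
    rw [← pow_mul, ← sq]
    exact hpow2 b
  have ec2 : ∀ c : K₄, (c ^ q) ^ q = c ^ q ^ 2 := by
    intro c
    rw [← pow_mul, ← sq]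
  have ec3 : ∀ c : K₄, (c ^ q) ^ q ^ 2 = c ^ q ^ 3 := by
    intro c
    rw [← pow_mul, ← pow_succ']
  have ec4 : ∀ c : K₄, (c ^ q) ^ q ^ 3 = c := by
    intro c
    rw [← pow_mul, ← pow_succ']
    exact hpow4 c
  have ec2' : ∀ c : K₄, (c ^ q ^ 2) ^ q = c ^ q ^ 3 := by
    intro c
    rw [← pow_mul, ← pow_succ]
  have ec3' : ∀ c : K₄, (c ^ q ^ 3) ^ q = c := by
    intro c
    rw [← pow_mul, ← pow_succ]
    exact hpow4 c
  -- ### trace maps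
  set T₂ : K₂ →+ K₂ :=
    { toFun := fun b => b + b ^ q
      map_zero' := by simp [zero_pow hq0]
      map_add' := by
        intro x y
        show (x + y) + (x + y) ^ q = (x + x ^ q) + (y + y ^ q)
        rw [hadd2 x y]
        ring } with hT₂def
  set T₄ : K₄ →+ K₄ :=
    { toFun := fun c => c + c ^ q + c ^ q ^ 2 + c ^ q ^ 3
      map_zero' := by simp [zero_pow hq0, zero_pow (pow_ne_zero 2 hq0), zero_pow (pow_ne_zero 3 hq0)]
      map_add' := by
        intro x y
        show (x + y) + (x + y) ^ q + (x + y) ^ q ^ 2 + (x + y) ^ q ^ 3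
          = (x + x ^ q + x ^ q ^ 2 + x ^ q ^ 3) + (y + y ^ q + y ^ q ^ 2 + y ^ q ^ 3)
        rw [hadd4 x y, haddpow4 2 x y, haddpow4 3 x y]
        ring } with hT₄def
  have hT₂ : ∀ b : K₂, T₂ b = b + b ^ q := fun b => rfl
  have hT₄ : ∀ c : K₄, T₄ c = c + c ^ q + c ^ q ^ 2 + c ^ q ^ 3 := fun c => rfl
  -- ### the fixed subfields
  set F₂ : Finset K₂ := Finset.univ.filter fun x => x ^ q = x with hF₂def
  set F₄ : Finset K₄ := Finset.univ.filter fun x => x ^ q = x with hF₄def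
  have hF₂card : F₂.card = q := by
    apply aux_count_pow_fixed hq
    rw [h2]
    simpa using Nat.sub_dvd_pow_sub_pow q 1 2
  have hF₄card : F₄.card = q := by
    apply aux_count_pow_fixed hq
    rw [h4]
    simpa using Nat.sub_dvd_pow_sub_pow q 1 4
  have hF24card : (Finset.univ.filter fun c : K₄ => c ^ q ^ 2 = c).card = q ^ 2 := by
    apply aux_count_pow_fixed (le_trans hq (Nat.le_self_pow (by omega) q))
    rw [h4]
    have := Nat.sub_dvd_pow_sub_pow (q ^ 2) 1 2
    rw [← pow_mul] at this
    simpa using this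
  -- traces land in the fixed subfields
  have hT₂mem : ∀ b : K₂, T₂ b ∈ F₂ := by
    intro b
    rw [hF₂def, Finset.mem_filter]
    refine ⟨Finset.mem_univ _, ?_⟩
    rw [hT₂, hadd2, epow2 b, add_comm]
  have hT₄mem : ∀ c : K₄, T₄ c ∈ F₄ := by
    intro c
    rw [hF₄def, Finset.mem_filter]
    refine ⟨Finset.mem_univ _, ?_⟩
    rw [hT₄, hadd4, hadd4, hadd4, ec2, ec2', ec3']
    ring
  -- kernels
  have hker2 : (Finset.univ.filter fun b : K₂ => T₂ b = 0).card ≤ q := by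
    have : (Finset.univ.filter fun b : K₂ => T₂ b = 0) = F₂ := by
      apply Finset.filter_congr
      intro b _
      rw [hT₂]
      constructor
      · intro h
        have := (add_eq_zero_iff_eq_neg.mp h)
        rw [CharTwo.neg_eq] at this
        exact this.symm
      · intro h
        rw [h]
        exact haddself2 b
    rw [this, hF₂card]
  have hker4 : (Finset.univ.filter fun c : K₄ => T₄ c = 0).card ≤ q ^ 3 := by
    have : (Finset.univ.filter fun c : K₄ => T₄ c = 0)
        = (Finset.univ.filter fun c : K₄ => c + c ^ q + c ^ q ^ 2 + c ^ q ^ 3 = 0) := rfl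
    rw [this]
    exact aux_ker_le hq
  -- fibers
  have hfib2 : ∀ t ∈ F₂, (Finset.univ.filter fun b : K₂ => T₂ b = t).card = q := by
    apply aux_fiber_count T₂ F₂ q hT₂mem hker2
    rw [h2, hF₂card]
    ring
  have hfib4 : ∀ t ∈ F₄, (Finset.univ.filter fun c : K₄ => T₄ c = t).card = q ^ 3 := by
    apply aux_fiber_count T₄ F₄ (q ^ 3) hT₄mem hker4
    rw [h4, hF₄card]
    ring
  have h1F₂ : (1:K₂) ∈ F₂ := by
    rw [hF₂def, Finset.mem_filter]
    exact ⟨Finset.mem_univ _, one_pow q⟩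
  have hsF₄ : ∀ b : K₂, (1 + algebraMap K₂ K₄ (T₂ b)) ∈ F₄ := by
    intro b
    have hb : (T₂ b) ^ q = T₂ b := (Finset.mem_filter.mp (hT₂mem b)).2
    rw [hF₄def, Finset.mem_filter]
    refine ⟨Finset.mem_univ _, ?_⟩
    rw [hadd4, one_pow, ← map_pow, hb]
  -- ### Frobenius preserves the conditions
  have hpres : ∀ v : K₂ × K₄, stmt9Cond K₂ K₄ q v → stmt9Cond K₂ K₄ q (v.1 ^ q, v.2 ^ q) := by
    rintro ⟨b, c⟩ ⟨hb, hc, hcond⟩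
    refine ⟨pow_ne_zero _ hb, pow_ne_zero _ hc, ?_⟩
    show (c ^ q + (c ^ q) ^ q + (c ^ q) ^ q ^ 2 + (c ^ q) ^ q ^ 3)
        + algebraMap K₂ K₄ (b ^ q + (b ^ q) ^ q) ≠ 1
    rw [ec2, ec3, ec4, epow2]
    intro h
    apply hcond
    show (c + c ^ q + c ^ q ^ 2 + c ^ q ^ 3) + algebraMap K₂ K₄ (b + b ^ q) = 1
    rw [← h]
    ring_nf
  -- ### cardinality of X
  set Xf : Finset (K₂ × K₄) := Finset.univ.filter (stmt9Cond K₂ K₄ q) with hXfdef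
  have hcond_unfold : ∀ (b : K₂) (c : K₄), stmt9Cond K₂ K₄ q (b, c) ↔
      (b ≠ 0 ∧ c ≠ 0 ∧ T₄ c + algebraMap K₂ K₄ (T₂ b) ≠ 1) := by
    intro b c
    rfl
  have hinner : ∀ b : K₂, (Finset.univ.filter fun c : K₄ => stmt9Cond K₂ K₄ q (b, c)).card
      = if b = 0 then 0 else if T₂ b = 1 then q ^ 4 - q ^ 3 else q ^ 4 - q ^ 3 - 1 := by
    intro b
    by_cases hb0 : b = 0
    · rw [if_pos hb0]
      rw [Finset.card_eq_zero, Finset.filter_eq_empty_iff]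
      intro c _
      rw [hcond_unfold]
      rintro ⟨h, -, -⟩
      exact h hb0
    · rw [if_neg hb0]
      set s : K₄ := 1 + algebraMap K₂ K₄ (T₂ b) with hs
      have hcond_iff : ∀ c : K₄, stmt9Cond K₂ K₄ q (b, c) ↔ (c ≠ 0 ∧ ¬ (T₄ c = s)) := by
        intro c
        rw [hcond_unfold]
        constructor
        · rintro ⟨-, hc, h3⟩
          refine ⟨hc, fun he => h3 ?_⟩
          rw [he, hs, add_assoc, haddself4, add_zero]
        · rintro ⟨hc, h3⟩
          refine ⟨hb0, hc, fun he => h3 ?_⟩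
          have : T₄ c + algebraMap K₂ K₄ (T₂ b) + algebraMap K₂ K₄ (T₂ b) = 1 + algebraMap K₂ K₄ (T₂ b) := by rw [he]
          rw [add_assoc, haddself4, add_zero] at this
          rw [this, hs]
      have hsmem : s ∈ F₄ := hsF₄ b
      have hfibs : (Finset.univ.filter fun c : K₄ => T₄ c = s).card = q ^ 3 := hfib4 s hsmem
      have hnots : (Finset.univ.filter fun c : K₄ => ¬ (T₄ c = s)).card = q ^ 4 - q ^ 3 := by
        rw [Finset.filter_not, Finset.card_sdiff_of_subset (Finset.filter_subset _ _), Finset.card_univ, h4,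
          hfibs]
      rw [Finset.filter_congr (fun c _ => hcond_iff c)]
      by_cases hb1 : T₂ b = 1
      · rw [if_pos hb1]
        have hs0 : s = 0 := by
          rw [hs, hb1, map_one]
          exact haddself4 1
        have : (Finset.univ.filter fun c : K₄ => c ≠ 0 ∧ ¬ (T₄ c = s))
            = (Finset.univ.filter fun c : K₄ => ¬ (T₄ c = s)) := by
          apply Finset.filter_congr
          intro c _
          constructor
          · rintro ⟨-, h⟩; exact h
          · intro h
            refine ⟨fun hc0 => h ?_, h⟩
            rw [hc0, map_zero, hs0]
        rw [this, hnots]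
      · rw [if_neg hb1]
        have hs0 : s ≠ 0 := by
          rw [hs]
          intro h
          rw [haddzero4] at h
          exact hb1 ((algebraMap K₂ K₄).injective (by rw [map_one, ← h])).symm
        have : (Finset.univ.filter fun c : K₄ => c ≠ 0 ∧ ¬ (T₄ c = s))
            = (Finset.univ.filter fun c : K₄ => ¬ (T₄ c = s)).erase 0 := by
          ext c
          rw [Finset.mem_erase, Finset.mem_filter, Finset.mem_filter]
          constructor
          · rintro ⟨-, hc0, h⟩; exact ⟨hc0, Finset.mem_univ _, h⟩
          · rintro ⟨hc0, -, h⟩; exact ⟨Finset.mem_univ _, hc0, h⟩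
        rw [this, Finset.card_erase_of_mem, hnots]
        rw [Finset.mem_filter]
        refine ⟨Finset.mem_univ _, ?_⟩
        rw [map_zero]
        exact fun h => hs0 h.symm
  -- counting b's
  have hcard_ne0 : (Finset.univ.filter fun b : K₂ => ¬ b = 0).card = q ^ 2 - 1 := by
    have h01 : (Finset.univ.filter fun b : K₂ => b = 0).card = 1 := by
      rw [Finset.filter_eq' Finset.univ (0:K₂), if_pos (Finset.mem_univ _), Finset.card_singleton]
    have := Finset.card_filter_add_card_filter_not (s := (Finset.univ : Finset K₂))
      (p := fun b : K₂ => b = 0)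
    rw [Finset.card_univ, h2, h01] at this
    omega
  have hT₂zero : T₂ (0:K₂) = 0 := map_zero T₂
  have hB1 : (Finset.univ.filter fun b : K₂ => ¬ b = 0 ∧ T₂ b = 1).card = q := by
    have : (Finset.univ.filter fun b : K₂ => ¬ b = 0 ∧ T₂ b = 1)
        = (Finset.univ.filter fun b : K₂ => T₂ b = 1) := by
      apply Finset.filter_congr
      intro b _
      constructor
      · rintro ⟨-, h⟩; exact h
      · intro h
        refine ⟨fun hb0 => ?_, h⟩
        rw [hb0, hT₂zero] at h
        exact zero_ne_one h
    rw [this]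
    exact hfib2 1 h1F₂
  have hB2 : (Finset.univ.filter fun b : K₂ => ¬ b = 0 ∧ ¬ T₂ b = 1).card = q ^ 2 - 1 - q := by
    have hsplit := Finset.card_filter_add_card_filter_not
      (s := Finset.univ.filter fun b : K₂ => ¬ b = 0) (p := fun b : K₂ => T₂ b = 1)
    rw [Finset.filter_filter, Finset.filter_filter] at hsplit
    rw [hcard_ne0, hB1] at hsplit
    omega
  have hXcard : Xf.card = q * (q ^ 4 - q ^ 3) + (q ^ 2 - 1 - q) * (q ^ 4 - q ^ 3 - 1) := by
    rw [hXfdef, aux_card_prod (stmt9Cond K₂ K₄ q),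
      Finset.sum_congr rfl (fun b _ => hinner b),
      ← Finset.sum_filter_add_sum_filter_not Finset.univ (fun b : K₂ => b = 0)]
    have e1 : ∑ b ∈ Finset.univ.filter (fun b : K₂ => b = 0),
        (if b = 0 then 0 else if T₂ b = 1 then q ^ 4 - q ^ 3 else q ^ 4 - q ^ 3 - 1) = 0 := by
      apply Finset.sum_eq_zero
      intro b hb
      rw [if_pos (Finset.mem_filter.mp hb).2]
    rw [e1, zero_add,
      ← Finset.sum_filter_add_sum_filter_not
        (Finset.univ.filter fun b : K₂ => ¬ b = 0) (fun b : K₂ => T₂ b = 1)]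
    have e2 : ∑ b ∈ (Finset.univ.filter fun b : K₂ => ¬ b = 0).filter (fun b : K₂ => T₂ b = 1),
        (if b = 0 then 0 else if T₂ b = 1 then q ^ 4 - q ^ 3 else q ^ 4 - q ^ 3 - 1)
        = q * (q ^ 4 - q ^ 3) := by
      rw [Finset.sum_congr rfl (fun b hb => ?_), Finset.sum_const, smul_eq_mul,
        Finset.filter_filter, hB1]
      rw [Finset.mem_filter, Finset.mem_filter] at hb
      rw [if_neg hb.1.2, if_pos hb.2]
    have e3 : ∑ b ∈ (Finset.univ.filter fun b : K₂ => ¬ b = 0).filter (fun b : K₂ => ¬ T₂ b = 1),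
        (if b = 0 then 0 else if T₂ b = 1 then q ^ 4 - q ^ 3 else q ^ 4 - q ^ 3 - 1)
        = (q ^ 2 - 1 - q) * (q ^ 4 - q ^ 3 - 1) := by
      rw [Finset.sum_congr rfl (fun b hb => ?_), Finset.sum_const, smul_eq_mul,
        Finset.filter_filter, hB2]
      rw [Finset.mem_filter, Finset.mem_filter] at hb
      rw [if_neg hb.1.2, if_neg hb.2]
    rw [e2, e3]
  -- ### fixed point counts
  set ψ : K₂ × K₄ → K₂ × K₄ := fun v => (v.1 ^ q, v.2 ^ q) with hψdef
  have hiter : ∀ (k : ℕ) (v : K₂ × K₄), ψ^[k] v = (v.1 ^ q ^ k, v.2 ^ q ^ k) := by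
    intro k
    induction k with
    | zero => intro v; simp
    | succ k ih =>
      intro v
      rw [Function.iterate_succ_apply', ih v, hψdef]
      show ((v.1 ^ q ^ k) ^ q, (v.2 ^ q ^ k) ^ q) = (v.1 ^ q ^ (k + 1), v.2 ^ q ^ (k + 1))
      rw [← pow_mul, ← pow_mul, ← pow_succ]
  have herase2 : ∀ (p : K₂ → Prop) (_ : ∀ x, Decidable (p x)),
      (Finset.univ.filter fun x : K₂ => ¬ x = 0 ∧ p x) = (Finset.univ.filter p).erase 0 := by
    intro p _
    ext x
    simp only [Finset.mem_filter, Finset.mem_erase, Finset.mem_univ, true_and]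
    try tauto
  have herase4 : ∀ (p : K₄ → Prop) (_ : ∀ x, Decidable (p x)),
      (Finset.univ.filter fun x : K₄ => ¬ x = 0 ∧ p x) = (Finset.univ.filter p).erase 0 := by
    intro p _
    ext x
    simp only [Finset.mem_filter, Finset.mem_erase, Finset.mem_univ, true_and]
    try tauto
  have hK2fix : (Finset.univ.filter fun b : K₂ => ¬ b = 0 ∧ b ^ q = b).card = q - 1 := by
    rw [herase2 _ (fun x => Classical.propDecidable _), Finset.card_erase_of_mem, ← hF₂def,
      hF₂card]
    rw [Finset.mem_filter]
    exact ⟨Finset.mem_univ _, by rw [zero_pow hq0]⟩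
  have hK4fix : (Finset.univ.filter fun c : K₄ => ¬ c = 0 ∧ c ^ q = c).card = q - 1 := by
    rw [herase4 _ (fun x => Classical.propDecidable _), Finset.card_erase_of_mem, ← hF₄def,
      hF₄card]
    rw [Finset.mem_filter]
    exact ⟨Finset.mem_univ _, by rw [zero_pow hq0]⟩
  have hK4fix2 : (Finset.univ.filter fun c : K₄ => ¬ c = 0 ∧ c ^ q ^ 2 = c).card = q ^ 2 - 1 := by
    rw [herase4 _ (fun x => Classical.propDecidable _), Finset.card_erase_of_mem, hF24card]
    rw [Finset.mem_filter]
    exact ⟨Finset.mem_univ _, by rw [zero_pow (pow_ne_zero 2 hq0)]⟩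
  -- the three nontrivial fixed point sets
  have hfixzero : ∀ c : K₄, c ^ q = c → T₄ c = 0 := by
    intro c hfc
    have hc2 : c ^ q ^ 2 = c := by rw [← ec2, hfc, hfc]
    have hc3 : c ^ q ^ 3 = c := by rw [← ec3, hfc, hc2]
    rw [hT₄, hfc, hc2, hc3]
    have expand : c + c + c + c = (c + c) + (c + c) := by ring
    rw [expand, haddself4]
  have hN1 : (Finset.univ.filter fun v : K₂ × K₄ =>
      stmt9Cond K₂ K₄ q v ∧ ψ^[1] v = v).card = (q - 1) * (q - 1) := by
    have hcongr : ∀ v : K₂ × K₄, (stmt9Cond K₂ K₄ q v ∧ ψ^[1] v = v) ↔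
        ((¬ v.1 = 0 ∧ v.1 ^ q = v.1) ∧ (¬ v.2 = 0 ∧ v.2 ^ q = v.2)) := by
      rintro ⟨b, c⟩
      rw [hiter 1]
      simp only [pow_one]
      show (stmt9Cond K₂ K₄ q (b, c) ∧ (b ^ q, c ^ q) = (b, c)) ↔ _
      rw [Prod.mk.injEq, hcond_unfold]
      constructor
      · rintro ⟨⟨hb, hc, -⟩, hfb, hfc⟩
        exact ⟨⟨hb, hfb⟩, ⟨hc, hfc⟩⟩
      · rintro ⟨⟨hb, hfb⟩, hc, hfc⟩
        refine ⟨⟨hb, hc, ?_⟩, hfb, hfc⟩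
        have hT2b : T₂ b = 0 := by rw [hT₂, hfb, haddself2]
        rw [hfixzero c hfc, hT2b, map_zero, add_zero]
        exact zero_ne_one
    rw [Finset.filter_congr (fun v _ => hcongr v),
      aux_filter_prod_card (fun b : K₂ => ¬ b = 0 ∧ b ^ q = b)
        (fun c : K₄ => ¬ c = 0 ∧ c ^ q = c), hK2fix, hK4fix]
  have hN3 : (Finset.univ.filter fun v : K₂ × K₄ =>
      stmt9Cond K₂ K₄ q v ∧ ψ^[3] v = v).card = (q - 1) * (q - 1) := by
    have hb3 : ∀ b : K₂, b ^ q ^ 3 = b ^ q := by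
      intro b
      rw [pow_succ, pow_mul, hpow2]
    have hcongr : ∀ v : K₂ × K₄, (stmt9Cond K₂ K₄ q v ∧ ψ^[3] v = v) ↔
        ((¬ v.1 = 0 ∧ v.1 ^ q = v.1) ∧ (¬ v.2 = 0 ∧ v.2 ^ q = v.2)) := by
      rintro ⟨b, c⟩
      rw [hiter 3]
      show (stmt9Cond K₂ K₄ q (b, c) ∧ (b ^ q ^ 3, c ^ q ^ 3) = (b, c)) ↔ _
      rw [Prod.mk.injEq, hcond_unfold]
      constructor
      · rintro ⟨⟨hb, hc, -⟩, hfb, hfc⟩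
        refine ⟨⟨hb, ?_⟩, hc, ?_⟩
        · rw [← hb3 b, hfb]
        · have := ec3' c
          rw [hfc] at this
          exact this
      · rintro ⟨⟨hb, hfb⟩, hc, hfc⟩
        have hc2 : c ^ q ^ 2 = c := by rw [← ec2, hfc, hfc]
        have hc3 : c ^ q ^ 3 = c := by rw [← ec3, hfc, hc2]
        have hT2b : T₂ b = 0 := by rw [hT₂, hfb, haddself2]
        refine ⟨⟨hb, hc, ?_⟩, by rw [hb3 b, hfb], hc3⟩
        rw [hfixzero c hfc, hT2b, map_zero, add_zero]
        exact zero_ne_one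
    rw [Finset.filter_congr (fun v _ => hcongr v),
      aux_filter_prod_card (fun b : K₂ => ¬ b = 0 ∧ b ^ q = b)
        (fun c : K₄ => ¬ c = 0 ∧ c ^ q = c), hK2fix, hK4fix]
  have hN2 : (Finset.univ.filter fun v : K₂ × K₄ =>
      stmt9Cond K₂ K₄ q v ∧ ψ^[2] v = v).card = (q ^ 2 - 1 - q) * (q ^ 2 - 1) := by
    have hT4c : ∀ c : K₄, c ^ q ^ 2 = c → T₄ c = 0 := by
      intro c hc2
      have hc3 : c ^ q ^ 3 = c ^ q := by rw [← ec2' c, hc2]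
      rw [hT₄, hc2, hc3]
      have expand : c + c ^ q + c + c ^ q = (c + c) + (c ^ q + c ^ q) := by ring
      rw [expand, haddself4, haddself4, add_zero]
    have hcongr : ∀ v : K₂ × K₄, (stmt9Cond K₂ K₄ q v ∧ ψ^[2] v = v) ↔
        ((¬ v.1 = 0 ∧ ¬ T₂ v.1 = 1) ∧ (¬ v.2 = 0 ∧ v.2 ^ q ^ 2 = v.2)) := by
      rintro ⟨b, c⟩
      rw [hiter 2]
      show (stmt9Cond K₂ K₄ q (b, c) ∧ (b ^ q ^ 2, c ^ q ^ 2) = (b, c)) ↔ _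
      rw [Prod.mk.injEq, hcond_unfold]
      constructor
      · rintro ⟨⟨hb, hc, h3⟩, -, hfc⟩
        refine ⟨⟨hb, fun hb1 => h3 ?_⟩, hc, hfc⟩
        rw [hT4c c hfc, hb1, map_one, zero_add]
      · rintro ⟨⟨hb, hb1⟩, hc, hfc⟩
        refine ⟨⟨hb, hc, fun h3 => hb1 ?_⟩, hpow2 b, hfc⟩
        rw [hT4c c hfc, zero_add] at h3
        exact (algebraMap K₂ K₄).injective (by rw [h3, map_one])
    rw [Finset.filter_congr (fun v _ => hcongr v),
      aux_filter_prod_card (fun b : K₂ => ¬ b = 0 ∧ ¬ T₂ b = 1)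
        (fun c : K₄ => ¬ c = 0 ∧ c ^ q ^ 2 = c), hB2, hK4fix2]
  -- ### the Frobenius action on the subtype
  set S := {v : K₂ × K₄ // stmt9Cond K₂ K₄ q v} with hSdef
  set φS : S → S := fun x => ⟨ψ x.val, hpres x.val x.property⟩ with hφSdef
  have hcomm : ∀ (n : ℕ) (x : S), (φS^[n] x).val = ψ^[n] x.val := by
    intro n
    induction n with
    | zero => intro x; rfl
    | succ n ih =>
      intro x
      rw [Function.iterate_succ_apply', Function.iterate_succ_apply', ← ih x]
  have hφS4 : ∀ x : S, φS^[4] x = x := by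
    intro x
    apply Subtype.ext
    rw [hcomm 4 x, hiter 4]
    have e1 : x.val.1 ^ q ^ 4 = x.val.1 := by
      have e : q ^ 4 = q ^ 2 * q ^ 2 := by ring
      rw [e, pow_mul, hpow2, hpow2]
    rw [e1, hpow4]
  have hid4 : φS^[4] = id := funext hφS4
  have hmod : ∀ (n : ℕ) (x : S), φS^[n] x = φS^[n % 4] x := by
    intro n x
    conv_lhs => rw [← Nat.div_add_mod n 4]
    rw [Function.iterate_add_apply, Function.iterate_mul, hid4, Function.iterate_id, id_eq]
  letI : AddAction (ZMod 4) S :=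
    { vadd := fun g x => φS^[g.val] x
      zero_vadd := fun x => rfl
      add_vadd := by
        intro g h x
        show φS^[(g + h).val] x = φS^[g.val] (φS^[h.val] x)
        rw [← Function.iterate_add_apply, ZMod.val_add]
        exact (hmod _ x).symm }
  have hvadd : ∀ (g : ZMod 4) (x : S), g +ᵥ x = φS^[g.val] x := fun g x => rfl
  letI : Fintype S := Fintype.ofFinite S
  letI : ∀ g : ZMod 4, Fintype (AddAction.fixedBy S g) := fun g => Fintype.ofFinite _
  letI : Fintype (Quotient (AddAction.orbitRel (ZMod 4) S)) := Fintype.ofFinite _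
  have hburn := AddAction.sum_card_fixedBy_eq_card_orbits_mul_card_addGroup (ZMod 4) S
  have hfixcard : ∀ g : ZMod 4, Fintype.card (AddAction.fixedBy S g)
      = (Finset.univ.filter fun v : K₂ × K₄ =>
          stmt9Cond K₂ K₄ q v ∧ ψ^[g.val] v = v).card := by
    intro g
    rw [← Fintype.card_subtype]
    apply Fintype.card_congr
    have e1 : ∀ x : S, (x ∈ AddAction.fixedBy S g) ↔ ψ^[g.val] x.val = x.val := by
      intro x
      show g +ᵥ x = x ↔ _
      rw [hvadd, ← hcomm, Subtype.ext_iff]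
    exact (Equiv.subtypeEquivRight e1).trans
      (Equiv.subtypeSubtypeEquivSubtypeInter (stmt9Cond K₂ K₄ q) (fun v => ψ^[g.val] v = v))
  have huniv4 : (Finset.univ : Finset (ZMod 4)) = {0, 1, 2, 3} := by decide
  rw [huniv4, Finset.sum_insert (by decide), Finset.sum_insert (by decide),
    Finset.sum_insert (by decide), Finset.sum_singleton] at hburn
  have hg0 : ((0 : ZMod 4)).val = 0 := rfl
  have hg1 : ((1 : ZMod 4)).val = 1 := rfl
  have hg2 : ((2 : ZMod 4)).val = 2 := rfl
  have hg3 : ((3 : ZMod 4)).val = 3 := rfl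
  rw [hfixcard 0, hfixcard 1, hfixcard 2, hfixcard 3, hg0, hg1, hg2, hg3, ZMod.card] at hburn
  have hfix0 : (Finset.univ.filter fun v : K₂ × K₄ =>
      stmt9Cond K₂ K₄ q v ∧ ψ^[0] v = v).card = Xf.card := by
    congr 1
    rw [hXfdef]
    apply Finset.filter_congr
    intro v _
    simp only [Function.iterate_zero, id_eq]
    exact ⟨fun h => h.1, fun h => ⟨h, trivial⟩⟩
  rw [hfix0, hXcard, hN1, hN2, hN3] at hburn
  -- ### the quotient is the orbit space
  have key : ∀ (n : ℕ) (z : S), Quot.mk (fun x y : S => (x.1.1 ^ q, x.1.2 ^ q) = y.1) (φS^[n] z)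
      = Quot.mk (fun x y : S => (x.1.1 ^ q, x.1.2 ^ q) = y.1) z := by
    intro n
    induction n with
    | zero => intro z; rfl
    | succ n ih =>
      intro z
      rw [Function.iterate_succ_apply']
      calc Quot.mk _ (φS (φS^[n] z)) = Quot.mk (fun x y : S => (x.1.1 ^ q, x.1.2 ^ q) = y.1)
            (φS^[n] z) := (Quot.sound (r := fun x y : S => (x.1.1 ^ q, x.1.2 ^ q) = y.1) rfl).symm
      _ = _ := ih z
  have eqv : (Quot fun (x y : S) => (x.1.1 ^ q, x.1.2 ^ q) = y.1)
      ≃ Quotient (AddAction.orbitRel (ZMod 4) S) :=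
    { toFun := Quot.lift (fun x => Quotient.mk (AddAction.orbitRel (ZMod 4) S) x) (by
        intro x y hxy
        apply Quotient.sound
        apply (AddAction.orbitRel_apply).mpr
        have hy : φS x = y := Subtype.ext hxy
        refine AddAction.mem_orbit_iff.mpr ⟨(3 : ZMod 4), ?_⟩
        rw [hvadd, hg3, ← hy, ← Function.iterate_succ_apply]
        exact hφS4 x)
      invFun := Quotient.lift (Quot.mk _) (by
        intro x y hxy
        have hxy' : x ∈ AddAction.orbit (ZMod 4) y := (AddAction.orbitRel_apply).mp hxy
        obtain ⟨g, hg⟩ := AddAction.mem_orbit_iff.mp hxy'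
        rw [hvadd] at hg
        rw [← hg]
        exact key g.val y)
      left_inv := by
        intro a
        induction a using Quot.ind
        rfl
      right_inv := by
        intro a
        induction a using Quotient.ind
        rfl }
  refine ⟨hpres, ?_⟩
  have hNQ : Nat.card (Quot fun (x y : S) => (x.1.1 ^ q, x.1.2 ^ q) = y.1)
      = Fintype.card (Quotient (AddAction.orbitRel (ZMod 4) S)) := by
    rw [Nat.card_congr eqv, Nat.card_eq_fintype_card]
  rw [hNQ]
  -- ### arithmetic
  have i1 : q ^ 3 ≤ q ^ 4 := Nat.pow_le_pow_right (by omega) (by omega)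
  have h1q3 : 1 ≤ q ^ 3 := Nat.one_le_pow _ _ (by omega)
  have i2 : 1 ≤ q ^ 4 - q ^ 3 := by
    apply Nat.le_sub_of_add_le
    calc 1 + q ^ 3 ≤ q ^ 3 + q ^ 3 := by omega
    _ = 2 * q ^ 3 := by ring
    _ ≤ q * q ^ 3 := Nat.mul_le_mul_right _ hq
    _ = q ^ 4 := by ring
  have i3 : 1 ≤ q ^ 2 := Nat.one_le_pow _ _ (by omega)
  have i4 : q ≤ q ^ 2 - 1 := by
    apply Nat.le_sub_of_add_le
    calc q + 1 ≤ q + q := by omega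
    _ = 2 * q := by ring
    _ ≤ q * q := Nat.mul_le_mul_right _ hq
    _ = q ^ 2 := by ring
  have i5 : 1 ≤ q := by omega
  zify [i1, i2, i3, i4, i5] at hburn
  linear_combination -hburn
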